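/- Let Q be a graded ring, g ∈ Q_2 a non-zero-divisor, R = Q/(g), and M a graded R-module admitting a length-one graded free resolution 0 → Q^p(−1) → Q^p → M → 0 over Q. Then over R there is an exact sequence 0 → M(−2) → R^p(−1) → R^p → M → 0; that is, M is linear of period 2 over R. -/

import Mathlib

/-- A standard graded `k`-algebra structure on `R`, recorded via a family of
`k`-submodules `𝒜 j` (the graded components): `R = ⊕ 𝒜 j`, `𝒜 j = 0` for `j < 0`,
`𝒜 0 = k·1`, `R` is generated in degree one, and all components are finite dimensional. -/
structure IsStandardGraded (k : Type*) [Field k] (R : Type*) [CommRing R] [Algebra k R]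
    (𝒜 : ℤ → Submodule k R) : Prop where
  internal : DirectSum.IsInternal 𝒜
  one_mem : (1 : R) ∈ 𝒜 0
  mul_mem : ∀ ⦃i j : ℤ⦄ ⦃x y : R⦄, x ∈ 𝒜 i → y ∈ 𝒜 j → x * y ∈ 𝒜 (i + j)
  bot_of_neg : ∀ i : ℤ, i < 0 → 𝒜 i = ⊥
  deg_zero : 𝒜 0 = Submodule.span k {(1 : R)}
  gen_in_deg_one : ∀ i : ℤ, 0 ≤ i → 𝒜 (i + 1) = 𝒜 1 * 𝒜 i
  finite_dim : ∀ i : ℤ, FiniteDimensional k (𝒜 i)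

/-- A grading on an `R`-module `M` compatible with a grading `𝒜` on `R`,
with finite-dimensional components. -/
structure IsGradedModule (k : Type*) [Field k] (R : Type*) [CommRing R] [Algebra k R]
    (𝒜 : ℤ → Submodule k R) (M : Type*) [AddCommGroup M] [Module R M] [Module k M]
    [IsScalarTower k R M] (ℳ : ℤ → Submodule k M) : Prop where
  internal : DirectSum.IsInternal ℳ
  smul_mem : ∀ ⦃i j : ℤ⦄ ⦃x : R⦄ ⦃m : M⦄, x ∈ 𝒜 i → m ∈ ℳ j → x • m ∈ ℳ (i + j)
  finite_dim : ∀ j : ℤ, FiniteDimensional k (ℳ j)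

/-- A linear (minimal, degree-`d`) free resolution of the graded `R`-module `M`:
an exact complex `⋯ → R(−d−n−1)^{β (n+1)} → R(−d−n)^{β n} → ⋯ → R(−d)^{β 0} → M → 0`
in which every differential is given by a matrix with entries in `R₁ = 𝒜 1`, and the
generators of the `n`-th free module map to degree `d + n`. Its existence says exactly
that `M` is a linear module with `indeg M = d` (a Koszul module when `d = 0`). -/
structure LinearResolution (k : Type*) [Field k] (R : Type*) [CommRing R] [Algebra k R]
    (𝒜 : ℤ → Submodule k R) (M : Type*) [AddCommGroup M] [Module R M] [Module k M]
    [IsScalarTower k R M] (ℳ : ℤ → Submodule k M) (d : ℤ) where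
  β : ℕ → ℕ
  dd : ∀ n : ℕ, (Fin (β (n + 1)) → R) →ₗ[R] (Fin (β n) → R)
  aug : (Fin (β 0) → R) →ₗ[R] M
  aug_surjective : Function.Surjective aug
  aug_deg : ∀ i, aug (Pi.single i 1) ∈ ℳ d
  dd_linear : ∀ (n : ℕ) (i : Fin (β (n + 1))) (j : Fin (β n)),
    dd n (Pi.single i 1) j ∈ 𝒜 1
  exact_aug : Function.Exact (dd 0) aug
  exact_dd : ∀ n : ℕ, Function.Exact (dd (n + 1)) (dd n)

/-- `R` is a Koszul algebra: the residue field `k = R/R₊ = R/(R₁)` has a linear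
free resolution over `R`. -/
def IsKoszulAlgebra (k : Type*) [Field k] (R : Type*) [CommRing R] [Algebra k R]
    (𝒜 : ℤ → Submodule k R) : Prop :=
  Nonempty (LinearResolution k R 𝒜 (R ⧸ Ideal.span (𝒜 1 : Set R))
    (fun j => (𝒜 j).map ((Ideal.span (𝒜 1 : Set R)).mkQ.restrictScalars k)) 0)

section Aux

variable {k : Type*} [Field k] {V : Type*} [AddCommGroup V] [Module k V]

/-- In an independent family of submodules, a finite sum of members of different
components lying in a single component forces all other terms to vanish. -/
lemma aux_indep_vanish {N : ℤ → Submodule k V} (hind : iSupIndep N)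
    (s : Finset ℤ) (deg : ℤ → ℤ) (hdeg : Set.InjOn deg s) (f : ℤ → V)
    (hf : ∀ d ∈ s, f d ∈ N (deg d)) {j : ℤ}
    (hm : (∑ d ∈ s, f d) ∈ N j) : ∀ d ∈ s, deg d ≠ j → f d = 0 := by
  intro d0 hd0 hne
  have h1 : f d0 = (∑ d ∈ s, f d) - ∑ d ∈ s.erase d0, f d := by
    rw [← Finset.add_sum_erase s f hd0]; abel
  have hsup : f d0 ∈ ⨆ (i) (_ : i ≠ deg d0), N i := by
    rw [h1]
    refine Submodule.sub_mem _ ?_ (Submodule.sum_mem _ fun d hd => ?_)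
    · exact Submodule.mem_iSup_of_mem j (Submodule.mem_iSup_of_mem (Ne.symm hne) hm)
    · have hds : d ∈ s := Finset.mem_of_mem_erase hd
      have : deg d ≠ deg d0 := fun h =>
        (Finset.ne_of_mem_erase hd) (hdeg hds hd0 h)
      exact Submodule.mem_iSup_of_mem (deg d) (Submodule.mem_iSup_of_mem this (hf d hds))
  exact Submodule.disjoint_def.mp (hind (deg d0)) (f d0) (hf d0 hd0) hsup

/-- Decomposition of an element along an internal direct sum of submodules. -/
lemma aux_decomp {N : ℤ → Submodule k V} (hint : DirectSum.IsInternal N) (q : V) :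
    ∃ F : ℤ →₀ V, (∀ d, F d ∈ N d) ∧ ∑ d ∈ F.support, F d = q := by
  have hq : q ∈ ⨆ d, N d := by rw [hint.submodule_iSup_eq_top]; trivial
  obtain ⟨F, hF, hsum⟩ := (Submodule.mem_iSup_iff_exists_finsupp N q).mp hq
  exact ⟨F, hF, by simpa [Finsupp.sum] using hsum⟩

end Aux

/-- part of Theorem 3.1(3), (v)⇒(vi): let `g ∈ Q₂` be a
non-zero-divisor, `R = Q/(g)`, and let `M` be a graded `R`-module with a length-one
graded free resolution `0 → Q^p(−1) → Q^p → M → 0` over `Q` (the presentation matrix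
`φ` has entries in `Q₁`). Then over `R` there is an exact sequence
`0 → M(−2) → R^p(−1) → R^p → M → 0`, i.e. `M` is linear of period 2 over `R`:
there are `R`-linear maps `ι, ψ, π` with `ι` injective, `π` surjective, the sequence
exact, `ψ` given by a matrix of elements of `R₁`, `π` sending generators to degree-0
elements of `M`, and `ι` sending `M_j` into degree `j+2` of `R^p(−1)` (entries in
the image of `𝒜 (j+1)`). -/
theorem stmt7 {k Q : Type*} [Field k] [CommRing Q] [Algebra k Q]
    (𝒜 : ℤ → Submodule k Q) (hQ : IsStandardGraded k Q 𝒜)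
    (g : Q) (hg2 : g ∈ 𝒜 2) (hreg : ∀ x : Q, g * x = 0 → x = 0)
    (M : Type*) [AddCommGroup M]
    [Module (Q ⧸ Ideal.span {g}) M] [Module Q M] [Module k M]
    [IsScalarTower Q (Q ⧸ Ideal.span {g}) M] [IsScalarTower k Q M]
    (ℳ : ℤ → Submodule k M)
    (hM : IsGradedModule k Q 𝒜 M ℳ)
    (p : ℕ)
    (φ : (Fin p → Q) →ₗ[Q] (Fin p → Q))
    (hφ1 : ∀ (i j : Fin p), φ (Pi.single i 1) j ∈ 𝒜 1)
    (hφinj : Function.Injective φ)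
    (augQ : (Fin p → Q) →ₗ[Q] M)
    (haug_surj : Function.Surjective augQ)
    (haug_deg : ∀ i, augQ (Pi.single i 1) ∈ ℳ 0)
    (hexQ : Function.Exact φ augQ) :
    ∃ (ι : M →ₗ[Q ⧸ Ideal.span {g}] (Fin p → Q ⧸ Ideal.span {g}))
      (ψ : (Fin p → Q ⧸ Ideal.span {g}) →ₗ[Q ⧸ Ideal.span {g}]
            (Fin p → Q ⧸ Ideal.span {g}))
      (π : (Fin p → Q ⧸ Ideal.span {g}) →ₗ[Q ⧸ Ideal.span {g}] M),
      Function.Injective ι ∧ Function.Surjective π ∧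
      Function.Exact ι ψ ∧ Function.Exact ψ π ∧
      (∀ (j : ℤ), ∀ m ∈ ℳ j, ∀ i : Fin p,
        ι m i ∈ (𝒜 (j + 1)).map
          (((Ideal.span {g} : Ideal Q).mkQ).restrictScalars k)) ∧
      (∀ (i j : Fin p), ψ (Pi.single i 1) j ∈ (𝒜 1).map
          (((Ideal.span {g} : Ideal Q).mkQ).restrictScalars k)) ∧
      (∀ i : Fin p, π (Pi.single i 1) ∈ ℳ 0) := by
  classical
  have hgI : g ∈ (Ideal.span {g} : Ideal Q) := Ideal.mem_span_singleton_self g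
  -- `g` kills `M`
  have hgm : ∀ m : M, g • m = 0 := by
    intro m
    rw [← algebraMap_smul (Q ⧸ Ideal.span ({g} : Set Q)) g m, Ideal.Quotient.algebraMap_eq,
      Ideal.Quotient.eq_zero_iff_mem.mpr hgI, zero_smul]
  have hqsmul : ∀ (q : Q) (m : M), (Ideal.Quotient.mk (Ideal.span {g} : Ideal Q) q) • m = q • m := by
    intro q m
    rw [← Ideal.Quotient.algebraMap_eq, algebraMap_smul]
  -- the componentwise quotient map
  set mkp : (Fin p → Q) →ₗ[Q] (Fin p → (Q ⧸ Ideal.span ({g} : Set Q))) :=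
    (Algebra.linearMap Q (Q ⧸ Ideal.span ({g} : Set Q))).compLeft (Fin p) with hmkp_def
  have hmkp_apply : ∀ (x : Fin p → Q) (i : Fin p),
      mkp x i = Ideal.Quotient.mk (Ideal.span {g} : Ideal Q) (x i) := fun x i => rfl
  have hmkp_g : ∀ x : Fin p → Q, mkp (g • x) = 0 := by
    intro x; funext i
    rw [hmkp_apply]
    show Ideal.Quotient.mk (Ideal.span {g} : Ideal Q) ((g • x) i) = 0
    rw [Pi.smul_apply, smul_eq_mul, Ideal.Quotient.eq_zero_iff_mem]
    exact Ideal.mul_mem_right _ _ hgI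
  have hmkp_surj : Function.Surjective mkp := by
    intro v
    refine ⟨fun i => (Ideal.Quotient.mk_surjective (v i)).choose, funext fun i => ?_⟩
    rw [hmkp_apply]
    exact (Ideal.Quotient.mk_surjective (v i)).choose_spec
  have hmkp_ker : ∀ x : Fin p → Q, mkp x = 0 → ∃ c, x = g • c := by
    intro x hx
    have : ∀ i, ∃ c, x i = g * c := by
      intro i
      have : Ideal.Quotient.mk (Ideal.span {g} : Ideal Q) (x i) = 0 := congrFun hx i
      exact Ideal.mem_span_singleton.mp (Ideal.Quotient.eq_zero_iff_mem.mp this)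
    choose c hc using this
    exact ⟨c, funext fun i => by rw [Pi.smul_apply, smul_eq_mul]; exact hc i⟩
  have hsingle : ∀ i : Fin p, mkp (Pi.single i 1) = Pi.single i 1 := by
    intro i; funext l
    rw [hmkp_apply]
    rcases eq_or_ne l i with h | h
    · subst h; rw [Pi.single_eq_same, Pi.single_eq_same, map_one]
    · rw [Pi.single_eq_of_ne h, Pi.single_eq_of_ne h, map_zero]
  have hgreg : ∀ x : Fin p → Q, g • x = 0 → x = 0 := by
    intro x hx
    funext i
    exact hreg (x i) (congrFun hx i)
  -- ψ and π
  set b : Module.Basis (Fin p) (Q ⧸ Ideal.span ({g} : Set Q)) (Fin p → (Q ⧸ Ideal.span ({g} : Set Q))) := Pi.basisFun (Q ⧸ Ideal.span ({g} : Set Q)) (Fin p) with hb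
  set ψ : (Fin p → (Q ⧸ Ideal.span ({g} : Set Q))) →ₗ[(Q ⧸ Ideal.span ({g} : Set Q))] (Fin p → (Q ⧸ Ideal.span ({g} : Set Q))) :=
    b.constr ℕ (fun i => mkp (φ (Pi.single i 1))) with hψdef
  set π : (Fin p → (Q ⧸ Ideal.span ({g} : Set Q))) →ₗ[(Q ⧸ Ideal.span ({g} : Set Q))] M :=
    b.constr ℕ (fun i => augQ (Pi.single i 1)) with hπdef
  have hψ_single : ∀ i : Fin p, ψ (Pi.single i 1) = mkp (φ (Pi.single i 1)) := by
    intro i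
    have : (Pi.single i 1 : Fin p → (Q ⧸ Ideal.span ({g} : Set Q))) = b i := (Pi.basisFun_apply (Q ⧸ Ideal.span ({g} : Set Q)) (Fin p) i).symm
    rw [this, hψdef, Module.Basis.constr_basis]
  have hπ_single : ∀ i : Fin p, π (Pi.single i 1) = augQ (Pi.single i 1) := by
    intro i
    have : (Pi.single i 1 : Fin p → (Q ⧸ Ideal.span ({g} : Set Q))) = b i := (Pi.basisFun_apply (Q ⧸ Ideal.span ({g} : Set Q)) (Fin p) i).symm
    rw [this, hπdef, Module.Basis.constr_basis]
  have hπ : ∀ x : Fin p → Q, π (mkp x) = augQ x := by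
    have hext : (π.restrictScalars Q).comp mkp = augQ := by
      refine Module.Basis.ext (Pi.basisFun Q (Fin p)) fun i => ?_
      rw [Pi.basisFun_apply]
      show π (mkp (Pi.single i 1)) = augQ (Pi.single i 1)
      rw [hsingle, hπ_single]
    intro x
    exact DFunLike.congr_fun hext x
  have hψ : ∀ x : Fin p → Q, ψ (mkp x) = mkp (φ x) := by
    have hext : (ψ.restrictScalars Q).comp mkp = mkp.comp φ := by
      refine Module.Basis.ext (Pi.basisFun Q (Fin p)) fun i => ?_
      rw [Pi.basisFun_apply]
      show ψ (mkp (Pi.single i 1)) = mkp (φ (Pi.single i 1))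
      rw [hsingle, hψ_single]
    intro x
    exact DFunLike.congr_fun hext x
  -- construction of ι
  have hL : ∀ m : M, augQ ((haug_surj m).choose) = m := fun m => (haug_surj m).choose_spec
  set L : M → (Fin p → Q) := fun m => (haug_surj m).choose with hLdef
  have hkz : ∀ m : M, augQ (g • L m) = 0 := by
    intro m; rw [map_smul, hL, hgm]
  have hzex : ∀ m : M, ∃ z, φ z = g • L m := fun m => (hexQ (g • L m)).mp (hkz m)
  set Z : M → (Fin p → Q) := fun m => (hzex m).choose with hZdef
  have hZ : ∀ m : M, φ (Z m) = g • L m := fun m => (hzex m).choose_spec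
  set ιf : M → (Fin p → (Q ⧸ Ideal.span ({g} : Set Q))) := fun m => mkp (Z m) with hιfdef
  -- well-definedness of ιf
  have star : ∀ (m : M) (x z : Fin p → Q), augQ x = m → φ z = g • x → ιf m = mkp z := by
    intro m x z hx hz
    have h1 : augQ (x - L m) = 0 := by rw [map_sub, hx, hL, sub_self]
    obtain ⟨w, hw⟩ := (hexQ _).mp h1
    have h2 : φ (z - Z m) = φ (g • w) := by
      rw [map_sub, hz, hZ, map_smul, hw, smul_sub]
    have h3 : z = Z m + g • w := by
      have := hφinj h2
      rw [← this]; abel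
    rw [hιfdef]
    rw [h3, map_add, hmkp_g, add_zero]
  have ιadd : ∀ m m' : M, ιf (m + m') = ιf m + ιf m' := by
    intro m m'
    have hx : augQ (L m + L m') = m + m' := by rw [map_add, hL, hL]
    have hz : φ (Z m + Z m') = g • (L m + L m') := by rw [map_add, hZ, hZ, smul_add]
    rw [star (m + m') _ _ hx hz, map_add]
  have ιsmul : ∀ (r : (Q ⧸ Ideal.span ({g} : Set Q))) (m : M), ιf (r • m) = r • ιf m := by
    intro r m
    obtain ⟨q, rfl⟩ := Ideal.Quotient.mk_surjective r
    have hx : augQ (q • L m) = (Ideal.Quotient.mk (Ideal.span {g} : Ideal Q) q) • m := by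
      rw [map_smul, hL, hqsmul]
    have hz : φ (q • Z m) = g • (q • L m) := by rw [map_smul, hZ, smul_comm]
    rw [star _ _ _ hx hz, map_smul]
    show q • mkp (Z m) = (Ideal.Quotient.mk (Ideal.span {g} : Ideal Q)) q • mkp (Z m)
    rw [← Ideal.Quotient.algebraMap_eq, algebraMap_smul]
  set ι : M →ₗ[(Q ⧸ Ideal.span ({g} : Set Q))] (Fin p → (Q ⧸ Ideal.span ({g} : Set Q))) :=
    { toFun := ιf
      map_add' := ιadd
      map_smul' := ιsmul } with hιdef
  have hιapp : ∀ m : M, ι m = ιf m := fun m => rfl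
  -- injectivity of ι
  have hιinj : Function.Injective ι := by
    rw [injective_iff_map_eq_zero]
    intro m hm
    rw [hιapp] at hm
    obtain ⟨c, hc⟩ := hmkp_ker _ hm
    have h1 : g • φ c = g • L m := by
      rw [← map_smul, ← hc, hZ]
    have h2 : g • (φ c - L m) = 0 := by rw [smul_sub, h1, sub_self]
    have h3 : φ c = L m := by
      have := hgreg _ h2
      rwa [sub_eq_zero] at this
    have : augQ (φ c) = 0 := (hexQ (φ c)).mpr ⟨c, rfl⟩
    rw [h3, hL] at this
    exact this
  -- surjectivity of π
  have hπsurj : Function.Surjective π := by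
    intro m
    exact ⟨mkp (L m), by rw [hπ, hL]⟩
  -- exactness ι-ψ
  have hexιψ : Function.Exact ι ψ := by
    intro v
    constructor
    · intro hv
      obtain ⟨x, rfl⟩ := hmkp_surj v
      rw [hψ] at hv
      obtain ⟨c, hc⟩ := hmkp_ker _ hv
      exact ⟨augQ c, by rw [hιapp, star (augQ c) c x rfl hc]⟩
    · rintro ⟨m, rfl⟩
      rw [hιapp, hιfdef]
      show ψ (mkp (Z m)) = 0
      rw [hψ, hZ, hmkp_g]
  -- exactness ψ-π
  have hexψπ : Function.Exact ψ π := by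
    intro v
    obtain ⟨x, rfl⟩ := hmkp_surj v
    constructor
    · intro hv
      rw [hπ] at hv
      obtain ⟨z, hz⟩ := (hexQ x).mp hv
      exact ⟨mkp z, by rw [hψ, hz]⟩
    · rintro ⟨w, hw⟩
      obtain ⟨y, rfl⟩ := hmkp_surj w
      rw [hψ] at hw
      have h1 : mkp (x - φ y) = 0 := by rw [map_sub, hw, sub_self]
      obtain ⟨c, hc⟩ := hmkp_ker _ h1
      have h2 : x = φ y + g • c := by rw [← hc]; abel
      rw [hπ, h2, map_add, map_smul, hgm, add_zero]
      exact (hexQ (φ y)).mpr ⟨y, rfl⟩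
  -- helper: image of homogeneous vectors
  have haug_hom : ∀ (d : ℤ) (x : Fin p → Q), (∀ i, x i ∈ 𝒜 d) → augQ x ∈ ℳ d := by
    intro d x hx
    have hx' : x = ∑ i, Pi.single i (x i) := (Finset.univ_sum_single x).symm
    rw [hx', map_sum]
    refine Submodule.sum_mem _ fun i _ => ?_
    have h1 : (Pi.single i (x i) : Fin p → Q) = x i • (Pi.single i (1 : Q) : Fin p → Q) := by
      funext l
      rcases eq_or_ne l i with h | h
      · subst h; rw [Pi.single_eq_same, Pi.smul_apply, Pi.single_eq_same, smul_eq_mul, mul_one]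
      · rw [Pi.single_eq_of_ne h, Pi.smul_apply, Pi.single_eq_of_ne h, smul_eq_mul, mul_zero]
    rw [h1, map_smul]
    have := hM.smul_mem (hx i) (haug_deg i)
    simpa using this
  have hφ_hom : ∀ (d : ℤ) (x : Fin p → Q), (∀ i, x i ∈ 𝒜 d) → ∀ l, φ x l ∈ 𝒜 (d + 1) := by
    intro d x hx l
    have hx' : x = ∑ i, Pi.single i (x i) := (Finset.univ_sum_single x).symm
    rw [hx', map_sum, Finset.sum_apply]
    refine Submodule.sum_mem _ fun i _ => ?_
    have h1 : (Pi.single i (x i) : Fin p → Q) = x i • (Pi.single i (1 : Q) : Fin p → Q) := by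
      funext l'
      rcases eq_or_ne l' i with h | h
      · subst h; rw [Pi.single_eq_same, Pi.smul_apply, Pi.single_eq_same, smul_eq_mul, mul_one]
      · rw [Pi.single_eq_of_ne h, Pi.smul_apply, Pi.single_eq_of_ne h, smul_eq_mul, mul_zero]
    rw [h1, map_smul, Pi.smul_apply, smul_eq_mul]
    exact hQ.mul_mem (hx i) (hφ1 i l)
  -- the degree condition for ι
  have hιdeg : ∀ (j : ℤ), ∀ m ∈ ℳ j, ∀ i : Fin p,
      ι m i ∈ (𝒜 (j + 1)).map (((Ideal.span {g} : Ideal Q).mkQ).restrictScalars k) := by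
    intro j m hm i
    -- decompose L m into homogeneous parts
    choose F hF1 hF2 using fun i => aux_decomp hQ.internal (L m i)
    set s : Finset ℤ := Finset.univ.biUnion (fun i => (F i).support) with hs
    have hsub : ∀ i, (F i).support ⊆ s := fun i => by
      rw [hs]
      exact Finset.subset_biUnion_of_mem (fun i => (F i).support) (Finset.mem_univ i)
    set xd : ℤ → (Fin p → Q) := fun d i => F i d with hxd
    have hLsum : L m = ∑ d ∈ s, xd d := by
      funext i
      rw [Finset.sum_apply, ← hF2 i]
      exact Finset.sum_subset (hsub i)
        (fun d _ hd => Finsupp.notMem_support_iff.mp hd)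
    have hmem : ∀ d ∈ s, augQ (xd d) ∈ ℳ d := fun d _ =>
      haug_hom d (xd d) (fun i => hF1 i d)
    have hsum_m : (∑ d ∈ s, augQ (xd d)) = m := by rw [← map_sum, ← hLsum, hL]
    have hvanish := aux_indep_vanish hM.internal.submodule_iSupIndep s id
      (Set.injOn_id _) (fun d => augQ (xd d)) hmem (j := j) (by rw [hsum_m]; exact hm)
    have hxj : ∀ i, xd j i ∈ 𝒜 j := fun i => hF1 i j
    have hmeq : m = augQ (xd j) := by
      by_cases hj : j ∈ s
      · rw [← hsum_m]
        exact Finset.sum_eq_single_of_mem j hj (fun d hd hdj => hvanish d hd hdj)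
      · have h0 : ∀ d ∈ s, augQ (xd d) = 0 := fun d hd =>
          hvanish d hd (fun h => hj (h ▸ hd))
        have hm0 : m = 0 := by rw [← hsum_m]; exact Finset.sum_eq_zero h0
        have hxd0 : xd j = 0 := funext fun i =>
          Finsupp.notMem_support_iff.mp (fun h => hj (hsub i h))
        rw [hm0, hxd0, map_zero]
    -- a homogeneous preimage
    have hkerx : augQ (g • xd j) = 0 := by rw [map_smul, ← hmeq, hgm]
    obtain ⟨z, hzx⟩ := (hexQ _).mp hkerx
    -- z is homogeneous of degree j + 1
    choose G hG1 hG2 using fun i => aux_decomp hQ.internal (z i)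
    set t : Finset ℤ := Finset.univ.biUnion (fun i => (G i).support) with ht
    have htsub : ∀ i, (G i).support ⊆ t := fun i => by
      rw [ht]
      exact Finset.subset_biUnion_of_mem (fun i => (G i).support) (Finset.mem_univ i)
    set zd : ℤ → (Fin p → Q) := fun d i => G i d with hzd
    have hzsum : z = ∑ d ∈ t, zd d := by
      funext i
      rw [Finset.sum_apply, ← hG2 i]
      exact Finset.sum_subset (htsub i)
        (fun d _ hd => Finsupp.notMem_support_iff.mp hd)
    have hvan2 : ∀ l : Fin p, ∀ d ∈ t, d + 1 ≠ j + 2 → φ (zd d) l = 0 := by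
      intro l
      have hdeg : Set.InjOn (· + 1) (t : Set ℤ) := fun a _ b _ h => by simpa using h
      refine aux_indep_vanish hQ.internal.submodule_iSupIndep t (· + 1) hdeg
        (fun d => φ (zd d) l) (fun d _ => hφ_hom d (zd d) (fun i => hG1 i d) l)
        (j := j + 2) ?_
      have h1 : (∑ d ∈ t, φ (zd d) l) = φ z l := by
        rw [hzsum, map_sum, Finset.sum_apply]
      rw [h1, hzx]
      have h2 : (g • xd j) l = g * xd j l := rfl
      rw [h2]
      have := hQ.mul_mem hg2 (hxj l)
      rwa [show (2 : ℤ) + j = j + 2 by omega] at this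
    have hvan2' : ∀ d ∈ t, d ≠ j + 1 → zd d = 0 := by
      intro d hd hdj
      have h0 : φ (zd d) = φ 0 := by
        rw [map_zero]
        funext l
        exact hvan2 l d hd (by omega)
      exact hφinj h0
    have hz_hom : ∀ i, z i ∈ 𝒜 (j + 1) := by
      intro i
      have h1 : z i = ∑ d ∈ t, zd d i := by rw [hzsum, Finset.sum_apply]
      by_cases hj : j + 1 ∈ t
      · rw [h1, Finset.sum_eq_single_of_mem (j + 1) hj
          (fun d hd hdj => by rw [hvan2' d hd hdj]; rfl)]
        exact hG1 i (j + 1)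
      · have : ∀ d ∈ t, zd d i = 0 := fun d hd => by
          rw [hvan2' d hd (fun h => hj (h ▸ hd))]; rfl
        rw [h1, Finset.sum_eq_zero this]
        exact Submodule.zero_mem _
    have hstar := star m (xd j) z hmeq.symm hzx
    rw [hιapp, hstar, hmkp_apply]
    exact ⟨z i, hz_hom i, rfl⟩
  -- assemble
  refine ⟨ι, ψ, π, hιinj, hπsurj, hexιψ, hexψπ, hιdeg, ?_, ?_⟩
  · intro i j
    rw [hψ_single, hmkp_apply]
    exact ⟨φ (Pi.single i 1) j, hφ1 i j, rfl⟩
  · intro i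
    rw [hπ_single]
    exact haug_deg i
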